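/- Let Ψ be a Young function. For s > 0 define N(s) = inf{ k > 0 : ∫₀^∞ Ψ(e^{−st}/k) dt ≤ 1 } (the Luxemburg norm of t ↦ e^{−st} on (0,∞)). Then N(s) ≤ 1/Ψ⁻¹(s) for every s > 0, i.e. Ψ⁻¹(s) ≤ 1/N(s). If, in addition, Ψ satisfies the Δ₂-condition globally with a constant K > 1, i.e. Ψ(2x) ≤ K·Ψ(x) for all x > 0, then with c = min{1, 1/(K·log K)} one has c·(1/N(s)) ≤ Ψ⁻¹(s) ≤ 1/N(s) for every s > 0. -/

import Mathlib

open MeasureTheory Set Filter Topology ENNReal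

noncomputable section

/-- A Young function on `(0,∞)`. -/
def IsYoungFunction (Φ : ℝ → ℝ) : Prop :=
  StrictMonoOn Φ (Set.Ioi 0) ∧ ContinuousOn Φ (Set.Ioi 0) ∧
  ConvexOn ℝ (Set.Ioi 0) Φ ∧ (∀ t : ℝ, 0 < t → 0 < Φ t) ∧
  Filter.Tendsto (fun t => Φ t / t) (nhdsWithin 0 (Set.Ioi 0)) (nhds 0) ∧
  Filter.Tendsto (fun t => Φ t / t) Filter.atTop Filter.atTop

/-- The Luxemburg norm of `t ↦ e^{−st}` on `(0,∞)` with respect to the Young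
function `Ψ`: `N(s) = inf{ k > 0 : ∫₀^∞ Ψ(e^{−st}/k) dt ≤ 1 }`. -/
def expLuxNorm (Ψ : ℝ → ℝ) (s : ℝ) : ℝ :=
  sInf {k : ℝ | 0 < k ∧
    ∫⁻ t in Set.Ioi (0:ℝ), ENNReal.ofReal (Ψ (Real.exp (-(s * t)) / k)) ≤ 1}

lemma young_tendsto_zero (Ψ : ℝ → ℝ) (hΨ : IsYoungFunction Ψ) :
    Filter.Tendsto Ψ (nhdsWithin 0 (Set.Ioi 0)) (nhds 0) := by
  have h0 := hΨ.2.2.2.2.1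
  have hid : Filter.Tendsto (fun t : ℝ => t) (nhdsWithin 0 (Set.Ioi 0)) (nhds 0) :=
    (continuous_id.tendsto 0).mono_left nhdsWithin_le_nhds
  have := h0.mul hid
  rw [mul_zero] at this
  refine this.congr' ?_
  filter_upwards [self_mem_nhdsWithin] with t (ht : (0:ℝ) < t)
  field_simp

lemma young_slope (Ψ : ℝ → ℝ) (hΨ : IsYoungFunction Ψ) {a b : ℝ}
    (ha : 0 < a) (hab : a ≤ b) : Ψ a * b ≤ Ψ b * a := by
  rcases eq_or_lt_of_le hab with rfl | hlt
  · ring_nf; exact le_refl _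
  have hconv := hΨ.2.2.1
  have hb : 0 < b := ha.trans hlt
  have key : ∀ ε : ℝ, 0 < ε → ε < a →
      Ψ a ≤ ((b - a) / (b - ε)) * Ψ ε + ((a - ε) / (b - ε)) * Ψ b := by
    intro ε hε hεa
    have hεb : ε < b := hεa.trans hlt
    have hden : 0 < b - ε := by linarith
    have h1 : (0:ℝ) ≤ (b - a) / (b - ε) := by apply div_nonneg <;> linarith
    have h2 : (0:ℝ) ≤ (a - ε) / (b - ε) := by apply div_nonneg <;> linarith
    have hsum : (b - a) / (b - ε) + (a - ε) / (b - ε) = 1 := by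
      rw [← add_div, div_eq_one_iff_eq hden.ne']; ring
    have hcx := hconv.2 (mem_Ioi.2 hε) (mem_Ioi.2 hb) h1 h2 hsum
    have harg : ((b - a) / (b - ε)) * ε + ((a - ε) / (b - ε)) * b = a := by
      rw [div_mul_eq_mul_div, div_mul_eq_mul_div, ← add_div,
        div_eq_iff hden.ne']; ring
    simp only [smul_eq_mul] at hcx
    rwa [harg] at hcx
  have hΨ0 := young_tendsto_zero Ψ hΨ
  have hlim : Filter.Tendsto (fun ε : ℝ => ((b - a) / (b - ε)) * Ψ ε + ((a - ε) / (b - ε)) * Ψ b)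
      (nhdsWithin 0 (Set.Ioi 0)) (nhds (((b - a) / b) * 0 + (a / b) * Ψ b)) := by
    apply Filter.Tendsto.add
    · apply Filter.Tendsto.mul _ hΨ0
      apply Filter.Tendsto.mono_left _ nhdsWithin_le_nhds
      have : Continuous fun ε : ℝ => b - ε := by continuity
      have h := (Filter.Tendsto.div (tendsto_const_nhds : Tendsto (fun _ : ℝ => b - a) (𝓝 0) (𝓝 (b - a))) (this.tendsto 0) (by simpa using hb.ne')); simp only [sub_zero] at h; exact h
    · apply Filter.Tendsto.mul_const
      apply Filter.Tendsto.mono_left _ nhdsWithin_le_nhds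
      have h1 : Continuous fun ε : ℝ => a - ε := by continuity
      have h2 : Continuous fun ε : ℝ => b - ε := by continuity
      have h := (Filter.Tendsto.div (h1.tendsto 0) (h2.tendsto 0) (by simpa using hb.ne')); simp only [sub_zero] at h; exact h
  have hle : Ψ a ≤ ((b - a) / b) * 0 + (a / b) * Ψ b := by
    refine ge_of_tendsto hlim ?_
    filter_upwards [Ioo_mem_nhdsGT_of_mem (show (0:ℝ) ∈ Ico 0 a from ⟨le_refl _, ha⟩)] with ε h2
    exact key ε h2.1 h2.2
  rw [mul_zero, zero_add] at hle
  calc Ψ a * b ≤ (a / b * Ψ b) * b := by nlinarith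
    _ = Ψ b * a := by field_simp

lemma young_scale_le (Ψ : ℝ → ℝ) (hΨ : IsYoungFunction Ψ) {x lam : ℝ}
    (hx : 0 < x) (h0 : 0 < lam) (h1 : lam ≤ 1) : Ψ (lam * x) ≤ lam * Ψ x := by
  have h := young_slope Ψ hΨ (a := lam * x) (b := x) (by positivity) (by nlinarith)
  nlinarith

lemma young_scale_ge (Ψ : ℝ → ℝ) (hΨ : IsYoungFunction Ψ) {x mu : ℝ}
    (hx : 0 < x) (h1 : 1 ≤ mu) : mu * Ψ x ≤ Ψ (mu * x) := by
  have h := young_slope Ψ hΨ (a := x) (b := mu * x) hx (by nlinarith)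
  nlinarith

lemma delta2_iterate (Ψ : ℝ → ℝ) (K : ℝ) (hK0 : 0 < K)
    (hΔ : ∀ x : ℝ, 0 < x → Ψ (2 * x) ≤ K * Ψ x) :
    ∀ n : ℕ, ∀ x : ℝ, 0 < x → Ψ x ≤ K ^ n * Ψ (x / 2 ^ n) := by
  intro n
  induction n with
  | zero => intro x hx; simp
  | succ n ih =>
    intro x hx
    have h1 := ih x hx
    have h2 : Ψ (x / 2 ^ n) ≤ K * Ψ (x / 2 ^ (n + 1)) := by
      have := hΔ (x / 2 ^ (n + 1)) (by positivity)
      have harg : 2 * (x / 2 ^ (n + 1)) = x / 2 ^ n := by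
        rw [pow_succ]; ring
      rwa [harg] at this
    calc Ψ x ≤ K ^ n * Ψ (x / 2 ^ n) := h1
      _ ≤ K ^ n * (K * Ψ (x / 2 ^ (n + 1))) := by
          apply mul_le_mul_of_nonneg_left h2 (by positivity)
      _ = K ^ (n + 1) * Ψ (x / 2 ^ (n + 1)) := by ring

lemma integral_s_exp (s : ℝ) (hs : 0 < s) :
    ∫ t in Ioi (0:ℝ), s * Real.exp (-(s * t)) = 1 := by
  have hderiv : ∀ x ∈ Ici (0:ℝ),
      HasDerivAt (fun t : ℝ => -Real.exp (-(s * t))) (s * Real.exp (-(s * x))) x := by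
    intro x _
    have h1 : HasDerivAt (fun t : ℝ => -(s * t)) (-s) x := by
      simpa only [mul_one] using ((hasDerivAt_id' x).const_mul s).fun_neg
    have h2 := h1.exp
    have := h2.fun_neg
    refine this.congr_deriv ?_
    ring
  have hint : IntegrableOn (fun x : ℝ => s * Real.exp (-(s * x))) (Ioi (0:ℝ)) := by
    have := (exp_neg_integrableOn_Ioi 0 hs).const_mul s
    simp only [neg_mul] at this; exact this
  have htend : Filter.Tendsto (fun t : ℝ => -Real.exp (-(s * t))) Filter.atTop (nhds 0) := by
    have h1 : Filter.Tendsto (fun t : ℝ => -(s * t)) Filter.atTop Filter.atBot := by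
      apply Filter.tendsto_neg_atBot_iff.2
      exact Filter.Tendsto.const_mul_atTop hs Filter.tendsto_id
    have := (Real.tendsto_exp_atBot.comp h1).neg
    simpa using this
  have := integral_Ioi_of_hasDerivAt_of_tendsto' hderiv hint htend
  simpa using this

lemma lint_exp_Ioi (s : ℝ) (hs : 0 < s) :
    ∫⁻ t in Ioi (0:ℝ), ENNReal.ofReal (s * Real.exp (-(s * t))) = 1 := by
  have hint : IntegrableOn (fun x : ℝ => s * Real.exp (-(s * x))) (Ioi (0:ℝ)) := by
    have := (exp_neg_integrableOn_Ioi 0 hs).const_mul s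
    simp only [neg_mul] at this; exact this
  rw [← ofReal_integral_eq_lintegral_ofReal hint
    (ae_of_all _ fun x => by positivity), integral_s_exp s hs]
  simp

lemma integral_exp_Ioc (s a b C : ℝ) (hs : 0 < s) (hab : a ≤ b) :
    ∫ t in Ioc a b, C * Real.exp (-(s * t))
      = C / s * (Real.exp (-(s * a)) - Real.exp (-(s * b))) := by
  rw [← intervalIntegral.integral_of_le hab]
  have hderiv : ∀ x ∈ Set.uIcc a b,
      HasDerivAt (fun t : ℝ => -(C / s) * Real.exp (-(s * t))) (C * Real.exp (-(s * x))) x := by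
    intro x _
    have h1 : HasDerivAt (fun t : ℝ => -(s * t)) (-s) x := by
      simpa only [mul_one] using ((hasDerivAt_id' x).const_mul s).fun_neg
    have h2 := (h1.exp).const_mul (-(C / s))
    refine h2.congr_deriv ?_
    rw [mul_neg, neg_mul_neg, mul_comm (Real.exp _) s, ← mul_assoc, div_mul_cancel₀ C hs.ne']
  have hcont : IntervalIntegrable (fun t : ℝ => C * Real.exp (-(s * t))) volume a b := by
    apply Continuous.intervalIntegrable
    continuity
  rw [intervalIntegral.integral_eq_sub_of_hasDerivAt (fun x hx => hderiv x hx) hcont]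
  ring

lemma lint_exp_Ioc (s a b C : ℝ) (hs : 0 < s) (hab : a ≤ b) (hC : 0 ≤ C) :
    ∫⁻ t in Ioc a b, ENNReal.ofReal (C * Real.exp (-(s * t)))
      = ENNReal.ofReal (C / s * (Real.exp (-(s * a)) - Real.exp (-(s * b)))) := by
  have hint : IntegrableOn (fun t : ℝ => C * Real.exp (-(s * t))) (Ioc a b) := by
    apply Continuous.integrableOn_Ioc
    continuity
  rw [← ofReal_integral_eq_lintegral_ofReal hint
    (ae_of_all _ fun x => by positivity), integral_exp_Ioc s a b C hs hab]

lemma inv_mono (Ψ Ψinv : ℝ → ℝ) (hΨ : IsYoungFunction Ψ)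
    (hΨinvpos : ∀ s : ℝ, 0 < s → 0 < Ψinv s)
    (hΨinv2 : ∀ s : ℝ, 0 < s → Ψ (Ψinv s) = s)
    {a b : ℝ} (ha : 0 < a) (hab : a ≤ b) : Ψinv a ≤ Ψinv b := by
  by_contra h
  push_neg at h
  have hb : 0 < b := lt_of_lt_of_le ha hab
  have := hΨ.1 (mem_Ioi.2 (hΨinvpos b hb)) (mem_Ioi.2 (hΨinvpos a ha)) h
  rw [hΨinv2 a ha, hΨinv2 b hb] at this
  linarith

lemma le_inv_of_psi_le (Ψ Ψinv : ℝ → ℝ) (hΨ : IsYoungFunction Ψ)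
    (hΨinvpos : ∀ s : ℝ, 0 < s → 0 < Ψinv s)
    (hΨinv1 : ∀ t : ℝ, 0 < t → Ψinv (Ψ t) = t)
    (hΨinv2 : ∀ s : ℝ, 0 < s → Ψ (Ψinv s) = s)
    {x s : ℝ} (hx : 0 < x) (hs : 0 < s) (h : Ψ x ≤ s) : x ≤ Ψinv s := by
  have hΨx : 0 < Ψ x := hΨ.2.2.2.1 x hx
  calc x = Ψinv (Ψ x) := (hΨinv1 x hx).symm
    _ ≤ Ψinv s := inv_mono Ψ Ψinv hΨ hΨinvpos hΨinv2 hΨx h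

lemma mem_upper (Ψ Ψinv : ℝ → ℝ) (hΨ : IsYoungFunction Ψ)
    (hΨinvpos : ∀ s : ℝ, 0 < s → 0 < Ψinv s)
    (hΨinv2 : ∀ s : ℝ, 0 < s → Ψ (Ψinv s) = s)
    (s : ℝ) (hs : 0 < s) :
    ∫⁻ t in Ioi (0:ℝ), ENNReal.ofReal (Ψ (Real.exp (-(s * t)) / (1 / Ψinv s))) ≤ 1 := by
  have hpos := hΨinvpos s hs
  have hmono : ∫⁻ t in Ioi (0:ℝ), ENNReal.ofReal (Ψ (Real.exp (-(s * t)) / (1 / Ψinv s)))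
      ≤ ∫⁻ t in Ioi (0:ℝ), ENNReal.ofReal (s * Real.exp (-(s * t))) := by
    apply setLIntegral_mono' measurableSet_Ioi
    intro t ht
    apply ENNReal.ofReal_le_ofReal
    have hexp : 0 < Real.exp (-(s * t)) := Real.exp_pos _
    have hexp1 : Real.exp (-(s * t)) ≤ 1 := by
      rw [← Real.exp_zero]
      apply Real.exp_le_exp.2
      have : 0 < s * t := mul_pos hs (mem_Ioi.1 ht)
      linarith
    have harg : Real.exp (-(s * t)) / (1 / Ψinv s) = Real.exp (-(s * t)) * Ψinv s := by
      field_simp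
    rw [harg]
    calc Ψ (Real.exp (-(s * t)) * Ψinv s) ≤ Real.exp (-(s * t)) * Ψ (Ψinv s) :=
        young_scale_le Ψ hΨ hpos hexp hexp1
      _ = s * Real.exp (-(s * t)) := by rw [hΨinv2 s hs]; ring
  calc _ ≤ _ := hmono
    _ = 1 := lint_exp_Ioi s hs

lemma lower_general (Ψ Ψinv : ℝ → ℝ) (hΨ : IsYoungFunction Ψ)
    (hΨinvpos : ∀ s : ℝ, 0 < s → 0 < Ψinv s)
    (hΨinv1 : ∀ t : ℝ, 0 < t → Ψinv (Ψ t) = t)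
    (hΨinv2 : ∀ s : ℝ, 0 < s → Ψ (Ψinv s) = s)
    (s k : ℝ) (hs : 0 < s) (hk : 0 < k)
    (hmem : ∫⁻ t in Ioi (0:ℝ), ENNReal.ofReal (Ψ (Real.exp (-(s * t)) / k)) ≤ 1) :
    Real.exp (-1) / Ψinv s ≤ k := by
  have hΨek : 0 < Ψ (Real.exp (-1) / k) := hΨ.2.2.2.1 _ (by positivity)
  have hlow : ENNReal.ofReal (Ψ (Real.exp (-1) / k) / s)
      ≤ ∫⁻ t in Ioi (0:ℝ), ENNReal.ofReal (Ψ (Real.exp (-(s * t)) / k)) := by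
    have h1 : ∫⁻ _t in Ioc (0:ℝ) (1/s), ENNReal.ofReal (Ψ (Real.exp (-1) / k))
        = ENNReal.ofReal (Ψ (Real.exp (-1) / k) / s) := by
      rw [setLIntegral_const, Real.volume_Ioc, ← ENNReal.ofReal_mul hΨek.le]
      congr 1
      field_simp
      simp
    calc ENNReal.ofReal (Ψ (Real.exp (-1) / k) / s)
        = ∫⁻ _t in Ioc (0:ℝ) (1/s), ENNReal.ofReal (Ψ (Real.exp (-1) / k)) := h1.symm
      _ ≤ ∫⁻ t in Ioc (0:ℝ) (1/s), ENNReal.ofReal (Ψ (Real.exp (-(s * t)) / k)) := by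
          apply setLIntegral_mono' measurableSet_Ioc
          intro t ht
          apply ENNReal.ofReal_le_ofReal
          have ht1 : 0 < t := ht.1
          have ht2 : s * t ≤ 1 := by
            have := ht.2
            rw [div_eq_mul_inv] at this
            calc s * t ≤ s * (1 * s⁻¹) := by
                  apply mul_le_mul_of_nonneg_left _ hs.le
                  simpa using this
              _ = 1 := by field_simp
          have hexp : Real.exp (-1) ≤ Real.exp (-(s * t)) := Real.exp_le_exp.2 (by linarith)
          rcases eq_or_lt_of_le hexp with heq | hlt
          · rw [← heq]
          · have hdiv : Real.exp (-1) / k < Real.exp (-(s * t)) / k := by gcongr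
            exact (hΨ.1 (mem_Ioi.2 (by positivity)) (mem_Ioi.2 (by positivity)) hdiv).le
      _ ≤ ∫⁻ t in Ioi (0:ℝ), ENNReal.ofReal (Ψ (Real.exp (-(s * t)) / k)) := by
          apply lintegral_mono_set
          exact Ioc_subset_Ioi_self
  have h2 : ENNReal.ofReal (Ψ (Real.exp (-1) / k) / s) ≤ 1 := le_trans hlow hmem
  rw [ENNReal.ofReal_le_one] at h2
  have h3 : Ψ (Real.exp (-1) / k) ≤ s := by
    rw [div_le_one hs] at h2
    linarith
  have h4 : Real.exp (-1) / k ≤ Ψinv s :=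
    le_inv_of_psi_le Ψ Ψinv hΨ hΨinvpos hΨinv1 hΨinv2 (by positivity) hs h3
  rw [div_le_iff₀ hk] at h4
  rw [div_le_iff₀ (hΨinvpos s hs)]
  linarith

lemma delta2_key (Ψ : ℝ → ℝ) (hΨ : IsYoungFunction Ψ) (K : ℝ) (hK : 1 < K)
    (hΔ : ∀ x : ℝ, 0 < x → Ψ (2 * x) ≤ K * Ψ x)
    (s k : ℝ) (hs : 0 < s) (hk : 0 < k)
    (hmem : ∫⁻ t in Ioi (0:ℝ), ENNReal.ofReal (Ψ (Real.exp (-(s * t)) / k)) ≤ 1) :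
    Ψ (1 / k) ≤ s * (K - 1) := by
  have hK0 : (0:ℝ) < K := by linarith
  have hK1 : (0:ℝ) < K - 1 := by linarith
  have hlog2 : (0:ℝ) < Real.log 2 := Real.log_pos (by norm_num)
  set P := Ψ (1 / k) with hP
  have hPpos : 0 < P := hΨ.2.2.2.1 _ (by positivity)
  set tn : ℕ → ℝ := fun n => n * Real.log 2 / s with htn
  have htn_nonneg : ∀ n : ℕ, 0 ≤ tn n := fun n => by positivity
  have htn_mono : ∀ n : ℕ, tn n ≤ tn (n + 1) := by
    intro n
    have h : (n:ℝ) ≤ ((n + 1 : ℕ) : ℝ) := by exact_mod_cast Nat.le_succ n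
    simp only [htn]
    gcongr
  have hexp : ∀ n : ℕ, Real.exp (-(s * tn n)) = ((2:ℝ) ^ n)⁻¹ := by
    intro n
    have h1 : s * tn n = n * Real.log 2 := by
      simp only [htn]; field_simp
    rw [h1, Real.exp_neg, Real.exp_nat_mul, Real.exp_log (by norm_num : (0:ℝ) < 2)]
  set Cc : ℕ → ℝ := fun n => 2 ^ (n + 1) * P / K ^ (n + 1) with hCc
  have hCcpos : ∀ n : ℕ, 0 < Cc n := fun n => by simp only [hCc]; positivity
  -- pointwise bound
  have hpt : ∀ n : ℕ, ∀ t ∈ Ioc (tn n) (tn (n + 1)),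
      ENNReal.ofReal (Cc n * Real.exp (-(s * t)))
        ≤ ENNReal.ofReal (Ψ (Real.exp (-(s * t)) / k)) := by
    intro n t ht
    apply ENNReal.ofReal_le_ofReal
    set u := Real.exp (-(s * t)) with hu
    have hupos : 0 < u := Real.exp_pos _
    have hul : ((2:ℝ) ^ (n + 1))⁻¹ ≤ u := by
      rw [← hexp (n + 1)]
      apply Real.exp_le_exp.2
      have : s * t ≤ s * tn (n + 1) := mul_le_mul_of_nonneg_left ht.2 hs.le
      linarith
    have h2pow : (0:ℝ) < 2 ^ (n + 1) := by positivity
    have hmu : 1 ≤ u * 2 ^ (n + 1) := by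
      calc (1:ℝ) = ((2:ℝ) ^ (n + 1))⁻¹ * 2 ^ (n + 1) := by field_simp
        _ ≤ u * 2 ^ (n + 1) := by gcongr
    have hx : (0:ℝ) < (1 / k) / 2 ^ (n + 1) := by positivity
    have hiter := delta2_iterate Ψ K hK0 hΔ (n + 1) (1 / k) (by positivity)
    have hscale := young_scale_ge Ψ hΨ hx hmu
    have harg : (u * 2 ^ (n + 1)) * ((1 / k) / 2 ^ (n + 1)) = u / k := by
      field_simp
    rw [harg] at hscale
    have hKpow : (0:ℝ) < K ^ (n + 1) := by positivity
    have hΨx : P / K ^ (n + 1) ≤ Ψ ((1 / k) / 2 ^ (n + 1)) := by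
      rw [div_le_iff₀ hKpow]
      calc P ≤ K ^ (n + 1) * Ψ (1 / k / 2 ^ (n + 1)) := hiter
        _ = Ψ (1 / k / 2 ^ (n + 1)) * K ^ (n + 1) := by ring
    calc Cc n * u = (u * 2 ^ (n + 1)) * (P / K ^ (n + 1)) := by
          simp only [hCc]; ring
      _ ≤ (u * 2 ^ (n + 1)) * Ψ ((1 / k) / 2 ^ (n + 1)) := by
          apply mul_le_mul_of_nonneg_left hΨx
          positivity
      _ ≤ Ψ (u / k) := hscale
  -- value of each block integral
  have hval : ∀ n : ℕ, ∫⁻ t in Ioc (tn n) (tn (n + 1)),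
      ENNReal.ofReal (Cc n * Real.exp (-(s * t)))
        = ENNReal.ofReal (P / (s * K ^ (n + 1))) := by
    intro n
    rw [lint_exp_Ioc s (tn n) (tn (n + 1)) (Cc n) hs (htn_mono n) (hCcpos n).le]
    congr 1
    rw [hexp n, hexp (n + 1)]
    have h1 : ((2:ℝ) ^ n)⁻¹ - ((2:ℝ) ^ (n + 1))⁻¹ = ((2:ℝ) ^ (n + 1))⁻¹ := by
      have h2 : (0:ℝ) < 2 ^ n := by positivity
      rw [pow_succ]
      field_simp
      ring
    rw [h1]
    simp only [hCc]
    have h2pow : ((2:ℝ) ^ (n+1)) ≠ 0 := by positivity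
    have hKpow : ((K:ℝ) ^ (n+1)) ≠ 0 := by positivity
    field_simp
  -- induction: partial sums bounded by the integral
  have hind : ∀ N : ℕ, ENNReal.ofReal (∑ n ∈ Finset.range N, P / (s * K ^ (n + 1)))
      ≤ ∫⁻ t in Ioc (0:ℝ) (tn N), ENNReal.ofReal (Ψ (Real.exp (-(s * t)) / k)) := by
    intro N
    induction N with
    | zero => simp [htn]
    | succ N ih =>
      have hsplit : Ioc (0:ℝ) (tn (N + 1)) = Ioc 0 (tn N) ∪ Ioc (tn N) (tn (N + 1)) :=
        (Ioc_union_Ioc_eq_Ioc (htn_nonneg N) (htn_mono N)).symm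
      rw [hsplit, lintegral_union measurableSet_Ioc (Set.Ioc_disjoint_Ioc_of_le le_rfl),
        Finset.sum_range_succ, ENNReal.ofReal_add (by positivity) (by positivity)]
      apply add_le_add ih
      calc ENNReal.ofReal (P / (s * K ^ (N + 1)))
          = ∫⁻ t in Ioc (tn N) (tn (N + 1)),
              ENNReal.ofReal (Cc N * Real.exp (-(s * t))) := (hval N).symm
        _ ≤ _ := setLIntegral_mono' measurableSet_Ioc (hpt N)
  -- all partial sums ≤ 1
  have hN : ∀ N : ℕ, (∑ n ∈ Finset.range N, P / (s * K ^ (n + 1))) ≤ 1 := by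
    intro N
    rw [← ENNReal.ofReal_le_one]
    calc ENNReal.ofReal (∑ n ∈ Finset.range N, P / (s * K ^ (n + 1)))
        ≤ ∫⁻ t in Ioc (0:ℝ) (tn N), ENNReal.ofReal (Ψ (Real.exp (-(s * t)) / k)) := hind N
      _ ≤ ∫⁻ t in Ioi (0:ℝ), ENNReal.ofReal (Ψ (Real.exp (-(s * t)) / k)) :=
          lintegral_mono_set Ioc_subset_Ioi_self
      _ ≤ 1 := hmem
  -- pass to the limit
  have hKinv : K⁻¹ < 1 := by
    rw [inv_lt_one_iff₀]
    right
    exact hK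
  have hgeo : HasSum (fun n : ℕ => (K⁻¹) ^ n) (1 - K⁻¹)⁻¹ :=
    hasSum_geometric_of_lt_one (by positivity) hKinv
  have htendS := hgeo.tendsto_sum_nat
  have hsum_eq : ∀ N : ℕ, (∑ n ∈ Finset.range N, P / (s * K ^ (n + 1)))
      = (P / s) * (K⁻¹ * ∑ n ∈ Finset.range N, (K⁻¹) ^ n) := by
    intro N
    rw [Finset.mul_sum, Finset.mul_sum]
    apply Finset.sum_congr rfl
    intro n _
    simp only [div_eq_mul_inv, mul_inv, inv_pow, pow_succ]
    ring
  have hlim : (P / s) * (K⁻¹ * (1 - K⁻¹)⁻¹) ≤ 1 := by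
    apply le_of_tendsto ((htendS.const_mul K⁻¹).const_mul (P / s))
    filter_upwards with N
    rw [← hsum_eq N]
    exact hN N
  have h1K : (1:ℝ) - K⁻¹ ≠ 0 := by
    have : (0:ℝ) < 1 - K⁻¹ := by linarith
    linarith
  have hfrac : K⁻¹ * (1 - K⁻¹)⁻¹ = (K - 1)⁻¹ := by
    rw [eq_comm, inv_eq_iff_eq_inv]
    field_simp
  rw [hfrac] at hlim
  have hfin : P / (s * (K - 1)) ≤ 1 := by
    rw [← div_div, div_eq_mul_inv (P / s) (K - 1)]
    exact hlim
  rw [div_le_one (by positivity)] at hfin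
  linarith

/-- `N(s) ≤ 1/Ψ⁻¹(s)` for every `s > 0`, and if `Ψ` satisfies the global
`Δ₂`-condition with constant `K > 1`, then with `c = min{1, 1/(K·log K)}` one has
`c·(1/N(s)) ≤ Ψ⁻¹(s) ≤ 1/N(s)` for every `s > 0`. -/
theorem luxemburg_norm_of_exponential
    (Ψ Ψinv : ℝ → ℝ) (hΨ : IsYoungFunction Ψ)
    (hΨinvpos : ∀ s : ℝ, 0 < s → 0 < Ψinv s)
    (hΨinv1 : ∀ t : ℝ, 0 < t → Ψinv (Ψ t) = t)
    (hΨinv2 : ∀ s : ℝ, 0 < s → Ψ (Ψinv s) = s) :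
    (∀ s : ℝ, 0 < s → expLuxNorm Ψ s ≤ 1 / Ψinv s ∧ Ψinv s ≤ 1 / expLuxNorm Ψ s) ∧
    (∀ K : ℝ, 1 < K → (∀ x : ℝ, 0 < x → Ψ (2 * x) ≤ K * Ψ x) →
      ∀ s : ℝ, 0 < s →
        min 1 (1 / (K * Real.log K)) * (1 / expLuxNorm Ψ s) ≤ Ψinv s ∧
        Ψinv s ≤ 1 / expLuxNorm Ψ s) := by
  -- generic facts for each s > 0
  have hmem : ∀ s : ℝ, 0 < s → (1 / Ψinv s) ∈ {k : ℝ | 0 < k ∧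
      ∫⁻ t in Set.Ioi (0:ℝ), ENNReal.ofReal (Ψ (Real.exp (-(s * t)) / k)) ≤ 1} := by
    intro s hs
    exact ⟨by have := hΨinvpos s hs; positivity, mem_upper Ψ Ψinv hΨ hΨinvpos hΨinv2 s hs⟩
  have hbdd : ∀ s : ℝ, BddBelow {k : ℝ | 0 < k ∧
      ∫⁻ t in Set.Ioi (0:ℝ), ENNReal.ofReal (Ψ (Real.exp (-(s * t)) / k)) ≤ 1} :=
    fun s => ⟨0, fun x hx => hx.1.le⟩
  have hub : ∀ s : ℝ, 0 < s → expLuxNorm Ψ s ≤ 1 / Ψinv s := by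
    intro s hs
    exact csInf_le (hbdd s) (hmem s hs)
  have hlb : ∀ s : ℝ, 0 < s → Real.exp (-1) / Ψinv s ≤ expLuxNorm Ψ s := by
    intro s hs
    apply le_csInf ⟨_, hmem s hs⟩
    intro k hk
    exact lower_general Ψ Ψinv hΨ hΨinvpos hΨinv1 hΨinv2 s k hs hk.1 hk.2
  have hNpos : ∀ s : ℝ, 0 < s → 0 < expLuxNorm Ψ s := by
    intro s hs
    refine lt_of_lt_of_le ?_ (hlb s hs)
    have := hΨinvpos s hs
    positivity
  have hpart1 : ∀ s : ℝ, 0 < s → expLuxNorm Ψ s ≤ 1 / Ψinv s ∧ Ψinv s ≤ 1 / expLuxNorm Ψ s := by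
    intro s hs
    refine ⟨hub s hs, ?_⟩
    have h := one_div_le_one_div_of_le (hNpos s hs) (hub s hs)
    rwa [one_div_one_div] at h
  refine ⟨hpart1, ?_⟩
  intro K hK hΔ s hs
  refine ⟨?_, (hpart1 s hs).2⟩
  have hK0 : (0:ℝ) < K := by linarith
  have hlogK : 0 < Real.log K := Real.log_pos hK
  set c := min 1 (1 / (K * Real.log K)) with hc
  have hcpos : 0 < c := lt_min one_pos (by positivity)
  have hc1 : c ≤ 1 := min_le_left _ _
  -- K - 1 ≤ K * log K
  have hexp := Real.add_one_le_exp (-Real.log K)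
  rw [Real.exp_neg, Real.exp_log hK0] at hexp
  have hKK : K - 1 ≤ K * Real.log K := by
    nlinarith [mul_le_mul_of_nonneg_left hexp hK0.le, mul_inv_cancel₀ hK0.ne']
  have hcK : c * (K - 1) ≤ 1 := by
    have h1 : c ≤ 1 / (K * Real.log K) := min_le_right _ _
    have h2 : c * (K - 1) ≤ (K - 1) / (K * Real.log K) := by
      rw [div_eq_mul_inv, mul_comm (K - 1)]
      apply mul_le_mul_of_nonneg_right _ (by linarith)
      rwa [← one_div]
    have h3 : (K - 1) / (K * Real.log K) ≤ 1 := by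
      rw [div_le_one (by positivity)]
      exact hKK
    linarith
  -- every admissible k satisfies c / Ψinv s ≤ k
  have hkey : ∀ k ∈ {k : ℝ | 0 < k ∧
      ∫⁻ t in Set.Ioi (0:ℝ), ENNReal.ofReal (Ψ (Real.exp (-(s * t)) / k)) ≤ 1},
      c / Ψinv s ≤ k := by
    intro k hk
    obtain ⟨hkpos, hkint⟩ := hk
    have h1 : Ψ (1 / k) ≤ s * (K - 1) := delta2_key Ψ hΨ K hK hΔ s k hs hkpos hkint
    have h2 : Ψ (c * (1 / k)) ≤ c * Ψ (1 / k) :=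
      young_scale_le Ψ hΨ (by positivity) hcpos hc1
    have h3 : Ψ (c / k) ≤ s := by
      have harg : c * (1 / k) = c / k := by ring
      rw [harg] at h2
      calc Ψ (c / k) ≤ c * Ψ (1 / k) := h2
        _ ≤ c * (s * (K - 1)) := by
            apply mul_le_mul_of_nonneg_left h1 hcpos.le
        _ = s * (c * (K - 1)) := by ring
        _ ≤ s * 1 := by apply mul_le_mul_of_nonneg_left hcK hs.le
        _ = s := mul_one s
    have h4 : c / k ≤ Ψinv s :=
      le_inv_of_psi_le Ψ Ψinv hΨ hΨinvpos hΨinv1 hΨinv2 (by positivity) hs h3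
    rw [div_le_iff₀ hkpos] at h4
    rw [div_le_iff₀ (hΨinvpos s hs)]
    linarith
  have h5 : c / Ψinv s ≤ expLuxNorm Ψ s := le_csInf ⟨_, hmem s hs⟩ hkey
  -- conclude
  rw [div_le_iff₀ (hΨinvpos s hs)] at h5
  rw [mul_one_div, div_le_iff₀ (hNpos s hs)]
  linarith [h5, mul_comm (expLuxNorm Ψ s) (Ψinv s)]
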